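/- If each per-step update State_t(·; s) of a streaming algorithm is an ε-DP local randomizer in its input bit for every state s, then there is a randomized post-processing function g : {0,1}^T → S^T such that for every input stream (x_1,...,x_T) and initial state s_0, the state trajectory (s_1,...,s_T) has the same distribution as g(RR_ε(x_1), ..., RR_ε(x_T)), where the T randomized responses are independent. -/
import Mathlib


open Real

/-- Probability that a streaming algorithm with per-step (randomized) state-update
kernels `St t x s s' = Pr[State_t(x; s) = s']`, run from initial state `s0` on the
input stream `x`, produces the state trajectory `σ = (s_1, …, s_T)`. -/
noncomputable def trajProb {S : Type} (T : ℕ) (St : ℕ → Bool → S → S → ℝ)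
    (s0 : S) (x : Fin T → Bool) (σ : Fin T → S) : ℝ :=
  ∏ t : Fin T,
    St t (x t)
      (if (t : ℕ) = 0 then s0
       else σ ⟨(t : ℕ) - 1, lt_of_le_of_lt (Nat.sub_le _ _) t.isLt⟩)
      (σ t)

/-- The `ε`-randomized response mechanism on a bit. -/
noncomputable def rrPMF (ε : ℝ) (b y : Bool) : ℝ :=
  if y = b then exp ε / (1 + exp ε) else 1 / (1 + exp ε)

/-- Any Markov-chain trajectory probability sums to 1 over trajectories. -/
lemma sum_trajProb {S : Type} [Fintype S] (T : ℕ) (K : ℕ → Bool → S → S → ℝ)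
    (s0 : S) (hK1 : ∀ t y s, ∑ s', K t y s s' = 1) (b : Fin T → Bool) :
    ∑ σ : Fin T → S, trajProb T K s0 b σ = 1 := by
  induction T with
  | zero => simp [trajProb]
  | succ n ih =>
    rw [← Equiv.sum_comp (Fin.snocEquiv (fun _ => S))]
    have key : ∀ (p : S × (Fin n → S)),
        trajProb (n+1) K s0 b (Fin.snocEquiv (fun _ => S) p)
          = trajProb n K s0 (fun t => b t.castSucc) p.2 *
            K n (b (Fin.last n))
              (if h : n = 0 then s0 else p.2 ⟨n - 1, by omega⟩) p.1 := by
      rintro ⟨s, σ'⟩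
      unfold trajProb
      simp only [Fin.snocEquiv_apply]
      rw [Fin.prod_univ_castSucc]
      congr 1
      · apply Finset.prod_congr rfl
        intro t _
        have h1 : Fin.snoc (α := fun _ => S) σ' s t.castSucc = σ' t := Fin.snoc_castSucc _ _ _
        simp only [Fin.coe_castSucc, h1]
        congr 1
        split
        · rfl
        · rename_i ht
          have hlt : (t : ℕ) - 1 < n := by omega
          have : (⟨(t:ℕ) - 1, lt_of_le_of_lt (Nat.sub_le _ _) t.castSucc.isLt⟩ : Fin (n+1))
              = Fin.castSucc ⟨(t:ℕ) - 1, hlt⟩ := by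
            apply Fin.ext; rfl
          rw [this, Fin.snoc_castSucc]
      · have h2 : Fin.snoc (α := fun _ => S) σ' s (Fin.last n) = s := Fin.snoc_last _ _
        simp only [Fin.val_last, h2]
        congr 1
        split
        · rename_i h; simp [h]
        · rename_i h
          have hlt : n - 1 < n := by omega
          have : (⟨n - 1, lt_of_le_of_lt (Nat.sub_le _ _) (Fin.last n).isLt⟩ : Fin (n+1))
              = Fin.castSucc ⟨n - 1, hlt⟩ := by
            apply Fin.ext; rfl
          rw [this, Fin.snoc_castSucc]
    calc ∑ p : S × (Fin n → S), trajProb (n+1) K s0 b (Fin.snocEquiv (fun _ => S) p)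
        = ∑ p : S × (Fin n → S), trajProb n K s0 (fun t => b t.castSucc) p.2 *
            K n (b (Fin.last n))
              (if h : n = 0 then s0 else p.2 ⟨n - 1, by omega⟩) p.1 := by
          apply Finset.sum_congr rfl; intro p _; exact key p
      _ = ∑ σ' : Fin n → S, ∑ s : S, trajProb n K s0 (fun t => b t.castSucc) σ' *
            K n (b (Fin.last n))
              (if h : n = 0 then s0 else σ' ⟨n - 1, by omega⟩) s := by
          rw [Fintype.sum_prod_type, Finset.sum_comm]
      _ = 1 := by
          rw [← ih (fun t => b t.castSucc)]
          apply Finset.sum_congr rfl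
          intro σ' _
          rw [← Finset.mul_sum, hK1, mul_one]

theorem stmt12 {S : Type} [Fintype S] (T : ℕ) (ε : ℝ) (hε : 0 < ε)
    (St : ℕ → Bool → S → S → ℝ) (s0 : S)
    (hSt0 : ∀ t x s s', 0 ≤ St t x s s')
    (hSt1 : ∀ t x s, ∑ s', St t x s s' = 1)
    (hDP : ∀ (t : ℕ) (s : S) (x x' : Bool) (s' : S),
      St t x s s' ≤ exp ε * St t x' s s') :
    ∃ g : (Fin T → Bool) → (Fin T → S) → ℝ,
      (∀ b σ, 0 ≤ g b σ) ∧ (∀ b, ∑ σ : Fin T → S, g b σ = 1) ∧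
        ∀ (x : Fin T → Bool) (σ : Fin T → S),
          trajProb T St s0 x σ =
            ∑ b : Fin T → Bool, (∏ t : Fin T, rrPMF ε (x t) (b t)) * g b σ := by
  have he1 : 1 < exp ε := Real.one_lt_exp_iff.mpr hε
  have heps : (0:ℝ) < exp ε - 1 := by linarith
  have hepos : (0:ℝ) < 1 + exp ε := by positivity
  set Kh : ℕ → Bool → S → S → ℝ :=
    fun t y s s' => (exp ε * St t y s s' - St t (!y) s s') / (exp ε - 1) with hKh
  have hKh0 : ∀ t y s s', 0 ≤ Kh t y s s' := by
    intro t y s s'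
    apply div_nonneg _ heps.le
    have := hDP t s (!y) y s'
    linarith
  have hKh1 : ∀ t y s, ∑ s', Kh t y s s' = 1 := by
    intro t y s
    simp only [hKh]
    rw [← Finset.sum_div, Finset.sum_sub_distrib, ← Finset.mul_sum, hSt1, hSt1]
    field_simp
  have hdecomp : ∀ t (x : Bool) s s',
      ∑ y : Bool, rrPMF ε x y * Kh t y s s' = St t x s s' := by
    intro t x s s'
    rw [Fintype.sum_bool]
    have h1 : exp ε - 1 ≠ 0 := ne_of_gt heps
    have h2 : 1 + exp ε ≠ 0 := ne_of_gt hepos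
    simp only [hKh, rrPMF]
    cases x <;> simp <;> field_simp <;> ring
  refine ⟨fun b σ => trajProb T Kh s0 b σ, ?_, ?_, ?_⟩
  · intro b σ
    exact Finset.prod_nonneg fun t _ => hKh0 _ _ _ _
  · intro b
    exact sum_trajProb T Kh s0 hKh1 b
  · intro x σ
    have : ∀ b : Fin T → Bool,
        (∏ t : Fin T, rrPMF ε (x t) (b t)) * trajProb T Kh s0 b σ
          = ∏ t : Fin T, (rrPMF ε (x t) (b t) *
              Kh t (b t)
                (if (t : ℕ) = 0 then s0
                 else σ ⟨(t : ℕ) - 1, lt_of_le_of_lt (Nat.sub_le _ _) t.isLt⟩)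
                (σ t)) := by
      intro b
      rw [trajProb, ← Finset.prod_mul_distrib]
    simp only [this]
    rw [← Fintype.prod_sum fun t y => rrPMF ε (x t) y *
          Kh t y
            (if (t : ℕ) = 0 then s0
             else σ ⟨(t : ℕ) - 1, lt_of_le_of_lt (Nat.sub_le _ _) t.isLt⟩)
            (σ t)]
    rw [trajProb]
    apply Finset.prod_congr rfl
    intro t _
    rw [hdecomp]
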